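/- Let A be a discrete valuation ring with uniformizer a and residue field k = A/(a), and let H be an A-module. Let H_τ ⊆ H be the torsion submodule. Then there is an exact sequence of A-modules 0 → aH_τ → H → (H/H_τ) ×_{(H/H_τ) ⊗_A k} (H ⊗_A k) → 0, where the map from H is given by the canonical projection H → H/H_τ together with the reduction H → H ⊗_A k, and the fiber product is taken over the two canonical maps to (H/H_τ) ⊗_A k. -/

import Mathlib

open TensorProduct

section Aux

variable {A : Type*} [CommRing A] {M : Type*} [AddCommGroup M] [Module A M]

lemma exists_rep_tmul_one (I : Ideal A) (t : M ⊗[A] (A ⧸ I)) :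
    ∃ m : M, m ⊗ₜ[A] (1 : A ⧸ I) = t := by
  induction t using TensorProduct.induction_on with
  | zero => exact ⟨0, by simp⟩
  | tmul m c =>
    obtain ⟨r, rfl⟩ := Ideal.Quotient.mk_surjective c
    refine ⟨r • m, ?_⟩
    rw [TensorProduct.smul_tmul]
    congr 1
    rw [show (1 : A ⧸ I) = Submodule.Quotient.mk 1 from rfl, ← Submodule.Quotient.mk_smul,
      smul_eq_mul, mul_one]
    rfl
  | add x y hx hy =>
    obtain ⟨m, rfl⟩ := hx; obtain ⟨n, rfl⟩ := hy
    exact ⟨m + n, TensorProduct.add_tmul m n 1⟩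

lemma tmul_one_eq_zero_iff (I : Ideal A) (x : M) :
    x ⊗ₜ[A] (1 : A ⧸ I) = (0 : M ⊗[A] (A ⧸ I)) ↔ x ∈ I • (⊤ : Submodule A M) := by
  rw [← (TensorProduct.tensorQuotEquivQuotSMul M I).injective.eq_iff, map_zero]
  have h1 : (1 : A ⧸ I) = Ideal.Quotient.mk I 1 := rfl
  rw [h1, TensorProduct.tensorQuotEquivQuotSMul_tmul_mk, one_smul,
    Submodule.Quotient.mk_eq_zero]

end Aux

/-- (5.12) Let `A` be a DVR with uniformizer `a` and residue field `k = A/(a)`,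
`H` an `A`-module with torsion submodule `H_τ`.  The map
`H → (H/H_τ) × (H ⊗ k)`, `x ↦ ([x], x ⊗ 1)`, has kernel `a·H_τ` and range the
fiber product `(H/H_τ) ×_{(H/H_τ) ⊗ k} (H ⊗ k)`, giving the exact sequence
`0 → aH_τ → H → (H/H_τ) ×_{(H/H_τ)⊗k} (H⊗k) → 0`. -/
theorem stmt11 {A : Type*} [CommRing A] [IsDomain A] [IsDiscreteValuationRing A]
    (a : A) (ha : Irreducible a)
    {H : Type*} [AddCommGroup H] [Module A H] :
    LinearMap.ker
        (LinearMap.prod (Submodule.torsion A H).mkQ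
          ((TensorProduct.mk A H (A ⧸ Ideal.span {a})).flip 1)) =
      Submodule.map (LinearMap.lsmul A H a) (Submodule.torsion A H) ∧
    LinearMap.range
        (LinearMap.prod (Submodule.torsion A H).mkQ
          ((TensorProduct.mk A H (A ⧸ Ideal.span {a})).flip 1)) =
      LinearMap.ker
        (((TensorProduct.mk A (H ⧸ Submodule.torsion A H) (A ⧸ Ideal.span {a})).flip 1).comp
            (LinearMap.fst A (H ⧸ Submodule.torsion A H)
              (TensorProduct A H (A ⧸ Ideal.span {a}))) -
          ((Submodule.torsion A H).mkQ.rTensor (A ⧸ Ideal.span {a})).comp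
            (LinearMap.snd A (H ⧸ Submodule.torsion A H)
              (TensorProduct A H (A ⧸ Ideal.span {a})))) := by
  have haz : a ∈ nonZeroDivisors A := mem_nonZeroDivisors_of_ne_zero ha.ne_zero
  constructor
  · ext x
    simp only [LinearMap.mem_ker, LinearMap.prod_apply, Function.prod, Prod.mk_eq_zero,
      Submodule.Quotient.mk_eq_zero, Submodule.mem_map, LinearMap.lsmul_apply,
      Submodule.mkQ_apply, LinearMap.flip_apply, TensorProduct.mk_apply]
    constructor
    · rintro ⟨hxt, hx0⟩
      rw [tmul_one_eq_zero_iff, Submodule.ideal_span_singleton_smul] at hx0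
      rw [← SetLike.mem_coe, Submodule.coe_pointwise_smul, Set.mem_smul_set] at hx0
      obtain ⟨y, -, rfl⟩ := hx0
      refine ⟨y, ?_, rfl⟩
      obtain ⟨c, hc⟩ := (Submodule.mem_torsion_iff _).mp hxt
      exact (Submodule.mem_torsion_iff _).mpr
        ⟨c * ⟨a, haz⟩, by rwa [mul_smul, Submonoid.mk_smul]⟩
    · rintro ⟨y, hy, rfl⟩
      refine ⟨Submodule.smul_mem _ a hy, ?_⟩
      rw [tmul_one_eq_zero_iff, Submodule.ideal_span_singleton_smul]
      exact Submodule.smul_mem_pointwise_smul _ _ _ trivial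
  · ext ⟨u, t⟩
    simp only [LinearMap.mem_range, LinearMap.prod_apply, Function.prod, LinearMap.mem_ker,
      LinearMap.sub_apply, LinearMap.comp_apply, LinearMap.fst_apply, LinearMap.snd_apply,
      LinearMap.flip_apply, TensorProduct.mk_apply, Submodule.mkQ_apply, sub_eq_zero,
      Prod.mk.injEq]
    constructor
    · rintro ⟨x, rfl, rfl⟩
      simp [LinearMap.rTensor_tmul]
    · rintro h
      obtain ⟨x, rfl⟩ := (Submodule.torsion A H).mkQ_surjective u
      have hker : LinearMap.rTensor (A ⧸ Ideal.span {a}) (Submodule.torsion A H).mkQ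
          (t - x ⊗ₜ[A] 1) = 0 := by
        rw [map_sub, LinearMap.rTensor_tmul, ← h]
        simp
      have hexact := rTensor_exact (A ⧸ Ideal.span {a})
        (LinearMap.exact_subtype_mkQ (Submodule.torsion A H))
        (Submodule.torsion A H).mkQ_surjective
      obtain ⟨w, hw⟩ := (hexact _).mp hker
      obtain ⟨s, rfl⟩ := exists_rep_tmul_one (Ideal.span {a}) w
      refine ⟨x + s, ?_, ?_⟩
      · simp [Submodule.Quotient.mk_add, (Submodule.Quotient.mk_eq_zero _).mpr s.2]
      · rw [LinearMap.rTensor_tmul] at hw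
        rw [TensorProduct.add_tmul]
        simp only [Submodule.coe_subtype] at hw
        rw [add_comm, hw]
        abel
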